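/- Let G ≤ GL₃(R) contain all elementary matrices, H ⊴ G be normal of finite index with H solvable of derived length n, and let I = { r ∈ R : t_{ij}(r) ∈ H for all i ≠ j }. Then any product of 2^n elements of I is zero; in particular I is a nilpotent two-sided ideal of R of finite additive index, so R is nilpotent-by-finite. -/

import Mathlib

open scoped commutatorElement


/-- The elementary matrix `t_{ij}(r) = 1 + r·E_{ij}`. -/
def elemMat {R : Type*} [Ring R] (i j : Fin 3) (r : R) : Matrix (Fin 3) (Fin 3) R :=
  1 + Matrix.single i j r

section aux

variable {R : Type*} [Ring R]

lemma elemMat_mul_same {i j : Fin 3} (hij : i ≠ j) (r s : R) :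
    elemMat i j r * elemMat i j s = elemMat i j (r + s) := by
  simp [elemMat, mul_add, add_mul, Matrix.single_mul_single_of_ne (c := r) i j i hij.symm,
    Matrix.single_add]
  abel

/-- The elementary matrix as a unit. -/
def tUnit (i j : Fin 3) (hij : i ≠ j) (r : R) : (Matrix (Fin 3) (Fin 3) R)ˣ where
  val := elemMat i j r
  inv := elemMat i j (-r)
  val_inv := by rw [elemMat_mul_same hij]; simp [elemMat]
  inv_val := by rw [elemMat_mul_same hij]; simp [elemMat]

@[simp] lemma tUnit_val (i j : Fin 3) (hij : i ≠ j) (r : R) :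
    (tUnit i j hij r).val = elemMat i j r := rfl

lemma tUnit_comm {i j c : Fin 3} (hij : i ≠ j) (hci : c ≠ i) (hcj : c ≠ j)
    (a b : R) :
    ⁅tUnit i c (Ne.symm hci) a, tUnit c j hcj b⁆ = tUnit i j hij (a * b) := by
  have key : tUnit i j hij (a * b) * tUnit c j hcj b * tUnit i c (Ne.symm hci) a
      = tUnit i c (Ne.symm hci) a * tUnit c j hcj b := by
    apply Units.ext
    show elemMat i j (a*b) * elemMat c j b * elemMat i c a = elemMat i c a * elemMat c j b
    simp [elemMat, mul_add, add_mul,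
      Matrix.single_mul_single_of_ne (c := a*b) i j c hcj.symm,
      Matrix.single_mul_single_of_ne (c := a*b) i j i hij.symm,
      Matrix.single_mul_single_of_ne (c := b) c j i hij.symm,
      Matrix.single_mul_single_same (c := a) i c j b]
    abel
  rw [commutatorElement_def, ← key]
  group

end aux

/-- Let `G ≤ GL₃(R)` contain all elementary matrices, `H ⊴ G` normal of finite index
with `H` solvable of derived length `n` (its `n`-th derived subgroup is trivial), and
`I = { r : t_{ij}(r) ∈ H for all i ≠ j }`. Then any product of `2^n` elements of `I`
is zero; in particular `I` is a nilpotent ideal of finite additive index, so `R` is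
nilpotent-by-finite. -/
theorem ring_nilpotent_by_finite_of_solvable {R : Type*} [Ring R] (n : ℕ)
    (G H : Subgroup (Matrix (Fin 3) (Fin 3) R)ˣ) (hHG : H ≤ G)
    (hnorm : ∀ g ∈ G, ∀ h ∈ H, g⁻¹ * h * g ∈ H)
    (hfin : H.relIndex G ≠ 0)
    (hsolv : derivedSeries (↥H) n = ⊥)
    (hG : ∀ (i j : Fin 3), i ≠ j → ∀ r : R, ∀ u : (Matrix (Fin 3) (Fin 3) R)ˣ,
      u.val = elemMat i j r → u ∈ G)
    (I : Set R)
    (hI : I = { r : R | ∀ (i j : Fin 3), i ≠ j →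
      ∀ u : (Matrix (Fin 3) (Fin 3) R)ˣ, u.val = elemMat i j r → u ∈ H }) :
    (∀ l : List R, l.length = 2 ^ n → (∀ r ∈ l, r ∈ I) → l.prod = 0) ∧
    (∃ T : Finset R, ∀ r : R, ∃ t ∈ T, r - t ∈ I) := by
  classical
  have hmem : ∀ r ∈ I, ∀ (i j : Fin 3) (hij : i ≠ j), tUnit i j hij r ∈ H := by
    intro r hr i j hij
    exact (hI ▸ hr) i j hij _ rfl
  have third : ∀ i j : Fin 3, i ≠ j → ∃ c, c ≠ i ∧ c ≠ j := by decide
  -- key induction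
  have key : ∀ k : ℕ, ∀ l : List R, l.length = 2 ^ k → (∀ r ∈ l, r ∈ I) →
      ∀ (i j : Fin 3) (hij : i ≠ j), ∃ x : ↥H, x ∈ derivedSeries (↥H) k ∧
        H.subtype x = tUnit i j hij l.prod := by
    intro k
    induction k with
    | zero =>
      intro l hlen hlI i j hij
      obtain ⟨a, rfl⟩ := List.length_eq_one_iff.mp hlen
      exact ⟨⟨tUnit i j hij a, hmem a (hlI a (by simp)) i j hij⟩,
        by rw [derivedSeries_zero]; exact Subgroup.mem_top _,
        by apply Units.ext; simp⟩
    | succ k ih =>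
      intro l hlen hlI i j hij
      obtain ⟨c, hci, hcj⟩ := third i j hij
      set l₁ := l.take (2 ^ k) with hl₁
      set l₂ := l.drop (2 ^ k) with hl₂
      have h1 : l₁.length = 2 ^ k := by
        rw [hl₁, List.length_take, hlen, pow_succ]; omega
      have h2 : l₂.length = 2 ^ k := by
        rw [hl₂, List.length_drop, hlen, pow_succ]; omega
      have hmemtake : ∀ r ∈ l₁, r ∈ I := fun r hr => hlI r (List.mem_of_mem_take hr)
      have hmemdrop : ∀ r ∈ l₂, r ∈ I := fun r hr => hlI r (List.mem_of_mem_drop hr)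
      obtain ⟨x, hx, hxval⟩ := ih l₁ h1 hmemtake i c (Ne.symm hci)
      obtain ⟨y, hy, hyval⟩ := ih l₂ h2 hmemdrop c j hcj
      refine ⟨⁅x, y⁆, ?_, ?_⟩
      · rw [derivedSeries_succ]
        exact Subgroup.commutator_mem_commutator hx hy
      · have hcomm : H.subtype ⁅x, y⁆ = ⁅H.subtype x, H.subtype y⁆ :=
          map_commutatorElement H.subtype x y
        rw [hcomm, hxval, hyval, tUnit_comm hij hci hcj]
        rw [← List.prod_append, List.take_append_drop]
  constructor
  · intro l hlen hlI
    obtain ⟨x, hx, hxval⟩ := key n l hlen hlI 0 1 (by decide)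
    rw [hsolv, Subgroup.mem_bot] at hx
    rw [hx] at hxval
    have : (1 : Matrix (Fin 3) (Fin 3) R) = elemMat 0 1 l.prod := congrArg Units.val hxval
    have h0 : Matrix.single (0 : Fin 3) (1 : Fin 3) l.prod = 0 := by
      rw [elemMat] at this
      rw [left_eq_add] at this
      exact this
    calc l.prod = Matrix.single (0 : Fin 3) (1 : Fin 3) l.prod 0 1 := by
          rw [Matrix.single_apply_same]
      _ = 0 := by rw [h0]; rfl
  · -- finite index part
    set M := (Matrix (Fin 3) (Fin 3) R)ˣ
    set K := H.subgroupOf G with hK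
    set Q := ↥G ⧸ K with hQ
    have hfinQ : Finite Q := by
      have : Nat.card Q ≠ 0 := hfin
      exact (Nat.card_ne_zero.mp this).2
    -- the map collecting all cosets
    let q : R → (Fin 3 → Fin 3 → Q) := fun r i j =>
      if hij : i ≠ j then
        QuotientGroup.mk (⟨tUnit i j hij r, hG i j hij r _ rfl⟩ : ↥G)
      else QuotientGroup.mk 1
    have hfinQ6 : Finite (Fin 3 → Fin 3 → Q) := by infer_instance
    have : Fintype (Fin 3 → Fin 3 → Q) := Fintype.ofFinite _
    let s : (Fin 3 → Fin 3 → Q) → R := fun c =>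
      if h : ∃ r, q r = c then h.choose else 0
    refine ⟨Finset.univ.image s, fun r => ⟨s (q r), Finset.mem_image_of_mem s (Finset.mem_univ _), ?_⟩⟩
    have hex : ∃ r', q r' = q r := ⟨r, rfl⟩
    have hst : q (s (q r)) = q r := by
      simp only [s, dif_pos hex]
      exact hex.choose_spec
    set t := s (q r) with ht
    rw [hI]
    intro i j hij u hu
    have hcoset : q t i j = q r i j := by rw [hst]
    simp only [q, dif_pos hij] at hcoset
    rw [QuotientGroup.eq] at hcoset
    rw [hK, Subgroup.mem_subgroupOf] at hcoset
    have hval : ((⟨tUnit i j hij t, hG i j hij t _ rfl⟩ : ↥G)⁻¹ *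
        (⟨tUnit i j hij r, hG i j hij r _ rfl⟩ : ↥G) : ↥G) =
        (⟨tUnit i j hij (r - t), hG i j hij (r - t) _ rfl⟩ : ↥G) := by
      apply Subtype.ext
      apply Units.ext
      show ((tUnit i j hij t)⁻¹ * tUnit i j hij r : M).val = elemMat i j (r - t)
      have hinv : ((tUnit i j hij t)⁻¹ : M) = tUnit i j hij (-t) := by
        apply Units.ext
        rfl
      rw [hinv]
      show elemMat i j (-t) * elemMat i j r = elemMat i j (r - t)
      rw [elemMat_mul_same hij, neg_add_eq_sub]
    rw [hval] at hcoset
    have : u = tUnit i j hij (r - t) := Units.ext hu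
    rw [this]
    exact hcoset
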